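/- arXiv:2001.11647 — 2 statements merged into one kernel-verified Lean document; each statement's English description precedes it below -/
import Mathlib

section
/- Let r ≥ 2 and μ ∈ P̄_k. For 1 ≤ m ≤ r−1 one has |H^m(μ)| = k·m − r·μ_{r−m} + |μ|, and |H^r(μ)| = |μ| − r·μ_r. -/
open scoped BigOperators
open Complex

noncomputable section

namespace VerlindePaper

/-- The Schur value `S_λ(z₁,…,z_r) = det(z_j^{λ_i+r-i}) / det(z_j^{r-i})`
(indices `i` are 0-based, so the exponent is `λ i + (r - 1 - i)`). -/
noncomputable def schur {r : ℕ} (lam : Fin r → ℤ) (z : Fin r → ℂ) : ℂ :=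
  Matrix.det (Matrix.of fun i j : Fin r => z j ^ (lam i + ((r : ℤ) - 1 - (i : ℕ)))) /
    Matrix.det (Matrix.of fun i j : Fin r => z j ^ ((r : ℤ) - 1 - (i : ℕ)))

/-- `ζ_v = (e^{2πi v_1/(r+k)}, …, e^{2πi v_r/(r+k)})`. -/
noncomputable def zeta (r k : ℕ) (v : Fin r → ℤ) : Fin r → ℂ :=
  fun j => Complex.exp (2 * (Real.pi : ℂ) * Complex.I * (v j : ℂ) / ((r : ℂ) + (k : ℂ)))

/-- `D(v) = ∏_{i<j} (2 sin(π(v_i - v_j)/(r+k)))²`. -/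
noncomputable def Dv (r k : ℕ) (v : Fin r → ℤ) : ℝ :=
  ∏ p ∈ Finset.univ.filter (fun p : Fin r × Fin r => p.1 < p.2),
    (2 * Real.sin (Real.pi * ((v p.1 : ℝ) - (v p.2 : ℝ)) / ((r : ℝ) + (k : ℝ)))) ^ 2

/-- `P̄_k = {μ : 0 ≤ μ_r ≤ ⋯ ≤ μ_1 ≤ k}` (0-based: `μ 0 = μ_1`). -/
def Pbar (r k : ℕ) : Finset (Fin r → ℤ) :=
  (Finset.Icc 0 (fun _ => (k : ℤ))).filter (fun μ => ∀ i j : Fin r, i ≤ j → μ j ≤ μ i)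

/-- `P_k = {μ : 0 ≤ μ_r ≤ ⋯ ≤ μ_1 ≤ k-1}`. -/
def Pk (r k : ℕ) : Finset (Fin r → ℤ) :=
  (Finset.Icc 0 (fun _ => (k : ℤ) - 1)).filter (fun μ => ∀ i j : Fin r, i ≤ j → μ j ≤ μ i)

/-- `W_k = {μ ∈ P̄_k : μ_r = 0}`. -/
def Wk (r k : ℕ) : Finset (Fin r → ℤ) :=
  (Pbar r k).filter (fun μ => ∀ i : Fin r, (i : ℕ) = r - 1 → μ i = 0)

/-- `μ* = (k - μ_r, k - μ_{r-1}, …, k - μ_1)`. -/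
def mustar (k : ℕ) {r : ℕ} (μ : Fin r → ℤ) : Fin r → ℤ :=
  fun i => (k : ℤ) - μ i.rev

/-- `μ ∼ ν` iff `μ - ν` is a constant vector. -/
def sim {r : ℕ} (μ ν : Fin r → ℤ) : Prop := ∃ a : ℤ, ∀ i, μ i = ν i + a

/-- The index set of the Verlinde sums: integer vectors with
`0 = v_r < v_{r-1} < ⋯ < v_1 < r + k`. -/
def Vset (r k : ℕ) : Finset (Fin r → ℤ) :=
  (Finset.Icc 0 (fun _ => (r : ℤ) + (k : ℤ) - 1)).filter
    (fun v => (∀ i j : Fin r, i < j → v j < v i) ∧ ∀ i : Fin r, (i : ℕ) = r - 1 → v i = 0)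

/-- The Verlinde number `V_g(r,d,(λ_x)_{x∈I})`. -/
noncomputable def verlinde (r k : ℕ) (g : ℕ) (d : ℤ) {I : Type*} [Fintype I]
    (lam : I → Fin r → ℤ) : ℂ :=
  (-1 : ℂ) ^ (d * ((r : ℤ) - 1)) * ((k : ℂ) / (r : ℂ)) ^ g *
    ((r : ℂ) * ((r : ℂ) + (k : ℂ)) ^ (r - 1)) ^ ((g : ℤ) - 1) *
    ∑ v ∈ Vset r k,
      Complex.exp (2 * (Real.pi : ℂ) * Complex.I *
          ((d : ℂ) / (r : ℂ) -
            (∑ x, ∑ i, (lam x i : ℂ)) / ((r : ℂ) * ((r : ℂ) + (k : ℂ)))) *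
          (∑ i, (v i : ℂ))) *
        (∏ x, schur (lam x) (zeta r k v)) * ((Dv r k v : ℂ)) ^ (1 - (g : ℤ))

/-- The Hecke transformation
`H¹(μ) = (k - μ_{r-1} + μ_r, μ_1 - μ_{r-1}, …, μ_{r-2} - μ_{r-1}, 0)`. -/
def H1 (k : ℕ) {r : ℕ} (μ : Fin r → ℤ) : Fin r → ℤ := fun j =>
  have hj : (j : ℕ) < r := j.isLt
  if (j : ℕ) = 0 then (k : ℤ) - μ ⟨r - 2, by omega⟩ + μ ⟨r - 1, by omega⟩
  else μ ⟨(j : ℕ) - 1, by omega⟩ - μ ⟨r - 2, by omega⟩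

/-- The iterated Hecke transformation `H^m = H¹ ∘ ⋯ ∘ H¹`. -/
def Hm (k : ℕ) {r : ℕ} (m : ℕ) (μ : Fin r → ℤ) : Fin r → ℤ := (H1 k)^[m] μ

/-- `μ ∈ Y(λ, ω_s)`: `μ` is a partition obtained from `λ` by adding `s` boxes,
no two in the same row. -/
def inY {r : ℕ} (lam : Fin r → ℤ) (s : ℕ) (μ : Fin r → ℤ) : Prop :=
  (∀ i j : Fin r, i ≤ j → μ j ≤ μ i) ∧ (∀ i, μ i - lam i = 0 ∨ μ i - lam i = 1) ∧
    (∑ i, μ i) = (∑ i, lam i) + (s : ℤ)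

/-- The Vandermonde product `Δ(z) = ∏_{i<j} (z_i - z_j)`. -/
noncomputable def vand {r : ℕ} (z : Fin r → ℂ) : ℂ :=
  ∏ p ∈ Finset.univ.filter (fun p : Fin r × Fin r => p.1 < p.2), (z p.1 - z p.2)

/-- `J_v(t) = Σ_{τ ∈ S_r} sgn(τ) exp(2πi (Σ_j v_{τ(j)} t_j)/(r+k))`. -/
noncomputable def Jv (r k : ℕ) (v : Fin r → ℤ) (t : Fin r → Fin (r + k)) : ℂ :=
  ∑ τ : Equiv.Perm (Fin r), ((Equiv.Perm.sign τ : ℤ) : ℂ) *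
    Complex.exp (2 * (Real.pi : ℂ) * Complex.I *
      (∑ j, (v (τ j) : ℂ) * ((t j : ℕ) : ℂ)) / ((r : ℂ) + (k : ℂ)))


lemma mcongr {r : ℕ} (μ : Fin r → ℤ) {a b : ℕ} (h : a = b) (ha : a < r) (hb : b < r) :
    μ ⟨a, ha⟩ = μ ⟨b, hb⟩ := by subst h; rfl

lemma sum_H1 {r : ℕ} (hr : 2 ≤ r) (k : ℕ) (ν : Fin r → ℤ) :
    ∑ j, H1 k ν j = (k : ℤ) + (∑ i, ν i) - (r : ℤ) * ν ⟨r - 2, by omega⟩ := by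
  obtain ⟨n, rfl⟩ : ∃ n, r = n + 2 := ⟨r - 2, by omega⟩
  set F : Fin (n + 2) → ℤ :=
    Function.update ν (Fin.last (n + 1)) ((k : ℤ) + ν (Fin.last (n + 1))) with hF
  have key : ∀ j : Fin (n + 2), H1 k ν j = F (j - 1) - ν ⟨n, by omega⟩ := by
    intro j
    by_cases h0 : (j : ℕ) = 0
    · have hj0 : j = 0 := Fin.ext h0
      subst hj0
      have h1 : (0 - 1 : Fin (n + 2)) = Fin.last (n + 1) := by
        ext; simp [Fin.sub_def, Fin.last]
      rw [h1]
      simp only [hF, Function.update_self, H1, Fin.val_zero]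
      rw [if_true]
      rw [mcongr ν (show n + 2 - 2 = n by omega) (by omega) (by omega),
        mcongr ν (show n + 2 - 1 = n + 1 by omega) (by omega) (by omega)]
      have : (Fin.last (n + 1)) = (⟨n + 1, by omega⟩ : Fin (n + 2)) := rfl
      rw [this]; ring
    · have h1 : (j - 1 : Fin (n + 2)) = ⟨(j : ℕ) - 1, by omega⟩ := by
        have hj := j.isLt
        ext
        simp only [Fin.sub_def, Fin.val_one, Fin.val_mk]
        rw [show n + 2 - 1 + (j : ℕ) = (n + 2) + ((j : ℕ) - 1) by omega,
          Nat.add_mod_left, Nat.mod_eq_of_lt (by omega)]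
      rw [h1]
      have hne : (⟨(j : ℕ) - 1, by omega⟩ : Fin (n + 2)) ≠ Fin.last (n + 1) := by
        simp only [ne_eq, Fin.ext_iff, Fin.val_last]
        have := j.isLt; omega
      simp only [hF, Function.update_of_ne hne, H1, h0, if_false]
      rw [mcongr ν (show n + 2 - 2 = n by omega) (by omega) (by omega)]
  calc ∑ j, H1 k ν j = ∑ j, (F (j - 1) - ν ⟨n, by omega⟩) := by
        exact Finset.sum_congr rfl fun j _ => key j
    _ = (∑ j, F (j - 1)) - (n + 2 : ℤ) * ν ⟨n, by omega⟩ := by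
        rw [Finset.sum_sub_distrib]
        simp [mul_comm]
    _ = (k : ℤ) + (∑ i, ν i) - ((n : ℤ) + 2) * ν ⟨n, by omega⟩ := by
        congr 1
        have h2 : (∑ j, F (j - 1)) = ∑ j, F j :=
          Fintype.sum_equiv (Equiv.subRight (1 : Fin (n + 2))) _ _ (fun j => rfl)
        rw [h2, hF, Finset.sum_update_of_mem (Finset.mem_univ _)]
        have h3 : ∑ i, ν i = ν (Fin.last (n+1)) + ∑ i ∈ Finset.univ.erase (Fin.last (n+1)), ν i := by
          rw [Finset.add_sum_erase _ _ (Finset.mem_univ _)]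
        rw [h3, Finset.erase_eq]; ring
    _ = _ := by
        push_cast
        rw [mcongr ν (show n = n + 2 - 2 by omega) (by omega) (by omega)]

lemma Hm_apply {r : ℕ} (hr : 2 ≤ r) (k : ℕ) (μ : Fin r → ℤ) :
    ∀ m : ℕ, 1 ≤ m → m ≤ r - 1 → ∀ j : Fin r,
      Hm k m μ j =
        if h : m ≤ (j : ℕ) then
          μ ⟨(j : ℕ) - m, by have := j.isLt; omega⟩ - μ ⟨r - 1 - m, by omega⟩
        else (k : ℤ) - μ ⟨r - 1 - m, by omega⟩ + μ ⟨r - m + (j : ℕ), by have := j.isLt; omega⟩ := by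
  intro m hm1
  induction m, hm1 using Nat.le_induction with
  | base =>
    intro _ j
    have h1 : Hm k 1 μ j = H1 k μ j := by rw [Hm, Function.iterate_one]
    rw [h1]
    simp only [H1]
    by_cases h0 : (j : ℕ) = 0
    · rw [if_pos h0, dif_neg (by omega)]
      rw [mcongr μ (show r - 2 = r - 1 - 1 by omega) (by omega) (by omega),
        mcongr μ (show r - 1 = r - 1 + (j : ℕ) by omega) (by omega) (by have := j.isLt; omega)]
    · rw [if_neg h0, dif_pos (show (1 : ℕ) ≤ (j : ℕ) by omega)]
      rw [mcongr μ (show r - 2 = r - 1 - 1 by omega) (by omega) (by omega)]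
  | succ m hm ih =>
    intro hmr j
    have hmr' : m ≤ r - 1 := by omega
    have hm2 : m ≤ r - 2 := by omega
    have hj := j.isLt
    have hstep : Hm k (m + 1) μ j = H1 k (Hm k m μ) j := by
      rw [Hm, Function.iterate_succ_apply']; rfl
    rw [hstep]
    simp only [H1]
    by_cases h0 : (j : ℕ) = 0
    · rw [if_pos h0]
      simp only [ih hmr']
      rw [dif_pos (show m ≤ ((⟨r - 2, by omega⟩ : Fin r) : ℕ) from hm2)]
      rw [dif_pos (show m ≤ ((⟨r - 1, by omega⟩ : Fin r) : ℕ) by show m ≤ r - 1; omega)]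
      rw [dif_neg (show ¬ m + 1 ≤ (j : ℕ) by omega)]
      rw [mcongr μ (show r - 2 - m = r - 1 - (m + 1) by omega) (by omega) (by omega),
        mcongr μ (show r - 1 - m = r - (m + 1) + (j : ℕ) by omega) (by omega) (by omega)]
      ring
    · rw [if_neg h0]
      simp only [ih hmr']
      rw [dif_pos (show m ≤ ((⟨r - 2, by omega⟩ : Fin r) : ℕ) from hm2)]
      by_cases hmj : m + 1 ≤ (j : ℕ)
      · rw [dif_pos (show m ≤ (j : ℕ) - 1 by omega), dif_pos hmj]
        rw [mcongr μ (show (j : ℕ) - 1 - m = (j : ℕ) - (m + 1) by omega) (by omega) (by omega),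
          mcongr μ (show r - 2 - m = r - 1 - (m + 1) by omega) (by omega) (by omega)]
        ring
      · rw [dif_neg (show ¬ m ≤ (j : ℕ) - 1 by omega), dif_neg hmj]
        rw [mcongr μ (show r - m + ((j : ℕ) - 1) = r - (m + 1) + (j : ℕ) by omega) (by omega) (by omega),
          mcongr μ (show r - 2 - m = r - 1 - (m + 1) by omega) (by omega) (by omega)]
        ring

/-- `|H^m(μ)| = km - rμ_{r-m} + |μ|` for `1 ≤ m ≤ r-1`, and
`|H^r(μ)| = |μ| - rμ_r`. -/
theorem sum_Hm (r k : ℕ) (hr : 2 ≤ r) (hk : 1 ≤ k)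
    (μ : Fin r → ℤ) (hμ : μ ∈ Pbar r k) :
    (∀ m : ℕ, 1 ≤ m → m ≤ r - 1 →
        ∑ i, Hm k m μ i =
          (k : ℤ) * (m : ℤ) - (r : ℤ) * μ ⟨r - m - 1, by omega⟩ + ∑ i, μ i) ∧
      ∑ i, Hm k r μ i = (∑ i, μ i) - (r : ℤ) * μ ⟨r - 1, by omega⟩ := by
  have hsum : ∀ m : ℕ, 1 ≤ m → m ≤ r - 1 →
      ∑ i, Hm k m μ i = (k : ℤ) * m - (r : ℤ) * μ ⟨r - 1 - m, by omega⟩ + ∑ i, μ i := by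
    intro m hm1
    induction m, hm1 using Nat.le_induction with
    | base =>
      intro _
      rw [Finset.sum_congr rfl (fun i _ => by rw [Hm, Function.iterate_one]),
        sum_H1 hr k μ,
        mcongr μ (show r - 2 = r - 1 - 1 by omega) (by omega) (by omega)]
      push_cast; ring
    | succ m hm ih =>
      intro hmr
      have hmr' : m ≤ r - 1 := by omega
      have hstep : ∀ i : Fin r, Hm k (m + 1) μ i = H1 k (Hm k m μ) i := fun i => by
        rw [Hm, Function.iterate_succ_apply']; rfl
      rw [Finset.sum_congr rfl (fun i _ => hstep i), sum_H1 hr k _, ih hmr',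
        Hm_apply hr k μ m hm hmr' ⟨r - 2, by omega⟩,
        dif_pos (show m ≤ ((⟨r - 2, by omega⟩ : Fin r) : ℕ) from by show m ≤ r - 2; omega),
        mcongr μ (show r - 2 - m = r - 1 - (m + 1) by omega) (by omega) (by omega)]
      push_cast; ring
  constructor
  · intro m hm1 hmr
    rw [hsum m hm1 hmr, mcongr μ (show r - 1 - m = r - m - 1 by omega) (by omega) (by omega)]
  · have h := Function.iterate_succ_apply' (H1 k) (r - 1) μ
    rw [show (r - 1).succ = r from by omega] at h
    have hr1 : (1 : ℕ) ≤ r - 1 := by omega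
    have hs : ∑ i, Hm k r μ i = ∑ i, H1 k (Hm k (r - 1) μ) i := by
      apply Finset.sum_congr rfl; intro i _
      show (H1 k)^[r] μ i = H1 k ((H1 k)^[r - 1] μ) i
      rw [h]
    rw [hs, sum_H1 hr k (Hm k (r - 1) μ), hsum (r - 1) hr1 le_rfl]
    have hlt : r - 2 < r := by omega
    set j2 : Fin r := ⟨r - 2, hlt⟩ with hj2
    have hj2v : (j2 : ℕ) = r - 2 := rfl
    have hv := Hm_apply hr k μ (r - 1) hr1 le_rfl j2
    rw [dif_neg (show ¬ r - 1 ≤ (j2 : ℕ) by omega)] at hv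
    have e1 : μ ⟨r - (r - 1) + (j2 : ℕ), by omega⟩ = μ ⟨r - 1, by omega⟩ :=
      mcongr μ (by omega) _ _
    have e2 : μ ⟨r - 1 - (r - 1), by omega⟩ = μ ⟨0, by omega⟩ :=
      mcongr μ (by omega) _ _
    rw [hv]
    push_cast [Nat.cast_sub (show 1 ≤ r by omega)]
    linear_combination (-(r : ℤ)) * e1
end VerlindePaper
end
end

section
/- Let λ and μ be vectors of integers with k ≥ λ_1 ≥ ⋯ ≥ λ_r ≥ 0 and k ≥ μ_1 ≥ ⋯ ≥ μ_r ≥ 0, and let ρ := (r−1, r−2, …, 1, 0). Then S_λ(ζ_{μ+ρ}) · Δ(ζ_{μ+ρ}) = S_μ(ζ_{λ+ρ}) · Δ(ζ_{λ+ρ}), where Δ(z_1,…,z_r) := ∏_{1≤i<j≤r}(z_i − z_j); indeed both sides equal det((exp(2πi(λ_i+ρ_i)(μ_j+ρ_j)/(r+k)))_{1≤i,j≤r}). -/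
open scoped BigOperators
open Complex

noncomputable section

namespace VerlindePaper

lemma prod_pairs' {r : ℕ} (f : Fin r → Fin r → ℂ) :
    ∏ p ∈ Finset.univ.filter (fun p : Fin r × Fin r => p.1 < p.2), f p.1 p.2
      = ∏ i : Fin r, ∏ j ∈ Finset.Ioi i, f i j := by
  rw [Finset.prod_filter, Fintype.prod_prod_type]
  refine Finset.prod_congr rfl fun i _ => ?_
  rw [← Finset.prod_filter]
  congr 1
  ext j
  simp [Finset.mem_Ioi]

lemma det_pow_rev {r : ℕ} (z : Fin r → ℂ) :
    Matrix.det (Matrix.of fun i j : Fin r => z j ^ ((r:ℤ)-1-(i:ℕ))) = vand z := by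
  have e1 : (Matrix.of fun i j : Fin r => z j ^ ((r:ℤ)-1-(i:ℕ)))
      = ((Matrix.vandermonde (z ∘ Fin.rev)).transpose.submatrix Fin.revPerm Fin.revPerm) := by
    ext i j
    have hi := i.isLt
    have h2 : ((r:ℤ)-1-(i:ℕ)) = ((r-1-(i:ℕ) : ℕ) : ℤ) := by omega
    rw [Matrix.of_apply, h2, zpow_natCast]
    simp only [Matrix.submatrix_apply, Matrix.transpose_apply, Matrix.vandermonde_apply,
      Fin.revPerm_apply, Function.comp_apply, Fin.rev_rev]
    congr 1
    rw [Fin.val_rev]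
    omega
  rw [vand, e1, Matrix.det_submatrix_equiv_self, Matrix.det_transpose,
    Matrix.det_vandermonde, ← prod_pairs']
  refine Finset.prod_bij' (fun p _ => (p.2.rev, p.1.rev)) (fun p _ => (p.2.rev, p.1.rev))
    ?_ ?_ ?_ ?_ ?_ <;> intro p hp <;>
    simp only [Finset.mem_filter, Finset.mem_univ, true_and] at hp ⊢
  · exact Fin.rev_lt_rev.mpr hp
  · exact Fin.rev_lt_rev.mpr hp
  · simp [Fin.rev_rev]
  · simp [Fin.rev_rev]
  · simp [Fin.rev_rev]

lemma key_lemma (r k : ℕ) (hr : 1 ≤ r) (hk : 1 ≤ k) (lam μ : Fin r → ℤ)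
    (hμ0 : ∀ i, 0 ≤ μ i) (hμk : ∀ i, μ i ≤ (k:ℤ))
    (hmono : ∀ i j : Fin r, i ≤ j → μ j ≤ μ i) :
    schur lam (zeta r k (fun i => μ i + ((r : ℤ) - 1 - (i : ℕ)))) *
        vand (zeta r k (fun i => μ i + ((r : ℤ) - 1 - (i : ℕ)))) =
      Matrix.det (Matrix.of fun i j : Fin r =>
        Complex.exp (2 * (Real.pi : ℂ) * Complex.I *
          ((lam i + ((r : ℤ) - 1 - (i : ℕ)) : ℤ) : ℂ) *
          ((μ j + ((r : ℤ) - 1 - (j : ℕ)) : ℤ) : ℂ) / ((r : ℂ) + (k : ℂ)))) := by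
  set w : Fin r → ℤ := fun i => μ i + ((r : ℤ) - 1 - (i : ℕ)) with hw
  set z : Fin r → ℂ := zeta r k w with hz
  have hn0 : ((r:ℂ)+(k:ℂ)) ≠ 0 := by
    have h : ((r+k:ℕ):ℂ) ≠ 0 := Nat.cast_ne_zero.mpr (by omega)
    push_cast at h; exact h
  have hI : (2*(Real.pi:ℂ)*Complex.I) ≠ 0 := by
    simp [Real.pi_ne_zero, Complex.I_ne_zero, Complex.ofReal_ne_zero]
  have hwlt : ∀ i j : Fin r, i < j → w j < w i := by
    intro i j hij
    have h1 := hmono i j (le_of_lt hij)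
    have h2 : (i:ℕ) < (j:ℕ) := hij
    have h3 : (j:ℕ) < r := j.isLt
    simp only [hw]
    omega
  have hwb : ∀ i : Fin r, 0 ≤ w i ∧ w i ≤ (k:ℤ) + r - 1 := by
    intro i
    have h1 := hμ0 i
    have h2 := hμk i
    have h3 : (i:ℕ) < r := i.isLt
    simp only [hw]
    omega
  have hzinj : Function.Injective z := by
    intro i j hEq
    by_contra hne
    simp only [hz, zeta, Complex.exp_eq_exp_iff_exists_int] at hEq
    obtain ⟨m, hm⟩ := hEq
    have h2 : (w i : ℂ) = (w j:ℂ) + m*((r:ℂ)+(k:ℂ)) := by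
      apply mul_left_cancel₀ hI
      field_simp at hm
      linear_combination (2*(Real.pi:ℂ)*Complex.I) * hm
    have h3 : w i = w j + m*((r:ℤ)+(k:ℤ)) := by exact_mod_cast h2
    have hne' : w i ≠ w j := by
      rcases lt_or_gt_of_ne hne with h | h
      · exact (hwlt i j h).ne'
      · exact (hwlt j i h).ne
    have hb1 := hwb i
    have hb2 := hwb j
    have hpos : (0:ℤ) ≤ (r:ℤ)+(k:ℤ) := by positivity
    rcases lt_trichotomy m 0 with hm0 | hm0 | hm0
    · have h4 : m * ((r:ℤ)+(k:ℤ)) ≤ -(r:ℤ)-(k:ℤ) := by nlinarith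
      linarith [hb1.1, hb1.2, hb2.1, hb2.2]
    · refine hne' ?_
      rw [hm0] at h3
      simpa using h3
    · have h4 : (r:ℤ)+(k:ℤ) ≤ m * ((r:ℤ)+(k:ℤ)) := by nlinarith
      linarith [hb1.1, hb1.2, hb2.1, hb2.2]
  have hden : Matrix.det (Matrix.of fun i j : Fin r => z j ^ ((r:ℤ)-1-(i:ℕ))) = vand z :=
    det_pow_rev z
  have hD : Matrix.det (Matrix.of fun i j : Fin r => z j ^ ((r:ℤ)-1-(i:ℕ))) ≠ 0 := by
    rw [hden, vand]
    apply Finset.prod_ne_zero_iff.mpr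
    intro p hp
    simp only [Finset.mem_filter, Finset.mem_univ, true_and] at hp
    exact sub_ne_zero.mpr (fun h => absurd (hzinj h) hp.ne)
  have hnum : Matrix.det (Matrix.of fun i j : Fin r => z j ^ (lam i + ((r:ℤ)-1-(i:ℕ))))
      = Matrix.det (Matrix.of fun i j : Fin r =>
        Complex.exp (2 * (Real.pi : ℂ) * Complex.I *
          ((lam i + ((r : ℤ) - 1 - (i : ℕ)) : ℤ) : ℂ) *
          ((μ j + ((r : ℤ) - 1 - (j : ℕ)) : ℤ) : ℂ) / ((r : ℂ) + (k : ℂ)))) := by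
    congr 1
    ext i j
    simp only [Matrix.of_apply, hz, zeta]
    rw [← Complex.exp_int_mul]
    congr 1
    simp only [hw]
    push_cast
    ring
  calc schur lam z * vand z
      = Matrix.det (Matrix.of fun i j : Fin r => z j ^ (lam i + ((r:ℤ)-1-(i:ℕ)))) /
          Matrix.det (Matrix.of fun i j : Fin r => z j ^ ((r:ℤ)-1-(i:ℕ))) *
          Matrix.det (Matrix.of fun i j : Fin r => z j ^ ((r:ℤ)-1-(i:ℕ))) := by
        rw [schur, hden]
    _ = Matrix.det (Matrix.of fun i j : Fin r => z j ^ (lam i + ((r:ℤ)-1-(i:ℕ)))) :=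
        div_mul_cancel₀ _ hD
    _ = _ := hnum


/-- symmetry `S_λ(ζ_{μ+ρ})·Δ(ζ_{μ+ρ}) = S_μ(ζ_{λ+ρ})·Δ(ζ_{λ+ρ})`,
both sides being `det(exp(2πi(λ_i+ρ_i)(μ_j+ρ_j)/(r+k)))`, where `ρ = (r-1,…,1,0)`. -/
theorem schur_vand_symm (r k : ℕ) (hr : 1 ≤ r) (hk : 1 ≤ k)
    (lam μ : Fin r → ℤ) (hlam : lam ∈ Pbar r k) (hμ : μ ∈ Pbar r k) :
    schur lam (zeta r k (fun i => μ i + ((r : ℤ) - 1 - (i : ℕ)))) *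
        vand (zeta r k (fun i => μ i + ((r : ℤ) - 1 - (i : ℕ)))) =
      Matrix.det (Matrix.of fun i j : Fin r =>
        Complex.exp (2 * (Real.pi : ℂ) * Complex.I *
          ((lam i + ((r : ℤ) - 1 - (i : ℕ)) : ℤ) : ℂ) *
          ((μ j + ((r : ℤ) - 1 - (j : ℕ)) : ℤ) : ℂ) / ((r : ℂ) + (k : ℂ)))) ∧
    schur μ (zeta r k (fun i => lam i + ((r : ℤ) - 1 - (i : ℕ)))) *
        vand (zeta r k (fun i => lam i + ((r : ℤ) - 1 - (i : ℕ)))) =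
      Matrix.det (Matrix.of fun i j : Fin r =>
        Complex.exp (2 * (Real.pi : ℂ) * Complex.I *
          ((lam i + ((r : ℤ) - 1 - (i : ℕ)) : ℤ) : ℂ) *
          ((μ j + ((r : ℤ) - 1 - (j : ℕ)) : ℤ) : ℂ) / ((r : ℂ) + (k : ℂ)))) := by
  simp only [Pbar, Finset.mem_filter, Finset.mem_Icc] at hlam hμ
  have hμ0 : ∀ i, 0 ≤ μ i := fun i => hμ.1.1 i
  have hμk : ∀ i, μ i ≤ (k:ℤ) := fun i => hμ.1.2 i
  have hl0 : ∀ i, 0 ≤ lam i := fun i => hlam.1.1 i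
  have hlk : ∀ i, lam i ≤ (k:ℤ) := fun i => hlam.1.2 i
  constructor
  · exact key_lemma r k hr hk lam μ hμ0 hμk hμ.2
  · rw [key_lemma r k hr hk μ lam hl0 hlk hlam.2, ← Matrix.det_transpose]
    congr 1
    ext i j
    simp only [Matrix.transpose_apply, Matrix.of_apply]
    congr 1
    ring
end VerlindePaper
end
end
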